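/- For every integer k ≥ 2 and every real λ, det(λ·I_{k+2} − J_{k+2}) = λ²·E_k(λ) − λ·E_{k−1}(λ) + pq·E_{k−2}(λ), where E_j(λ) = det(λ·I_j − √(pq)·A_j) with the convention E_0(λ) = 1. -/
import Mathlib


open Filter Finset

def T (d a : ℕ → ℝ) (m : ℕ) : Matrix (Fin m) (Fin m) ℝ :=
  fun i l => if i.1 = l.1 then d i.1 else if i.1 + 1 = l.1 then a i.1
    else if l.1 + 1 = i.1 then a l.1 else 0

lemma T_congr {d a d' a' : ℕ → ℝ} {m : ℕ} (hd : ∀ i < m, d i = d' i)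
    (ha : ∀ i, i + 1 < m → a i = a' i) : T d a m = T d' a' m := by
  ext i l
  simp only [T]
  split_ifs with h1 h2 h3
  · exact hd i.1 i.2
  · exact ha i.1 (h2 ▸ l.2)
  · exact ha l.1 (h3 ▸ i.2)
  · rfl

lemma T_det_front (d a : ℕ → ℝ) (n : ℕ) :
    (T d a (n+2)).det = d 0 * (T (fun i => d (i+1)) (fun i => a (i+1)) (n+1)).det
      - a 0 ^ 2 * (T (fun i => d (i+2)) (fun i => a (i+2)) n).det := by
  rw [Matrix.det_succ_row_zero, Fin.sum_univ_succ, Fin.sum_univ_succ]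
  have hrest : ∀ j : Fin n, (-1:ℝ) ^ ((j.succ.succ : Fin (n+2)) : ℕ) *
      T d a (n+2) 0 j.succ.succ *
      ((T d a (n+2)).submatrix Fin.succ j.succ.succ.succAbove).det = 0 := by
    intro j
    have : T d a (n+2) 0 j.succ.succ = 0 := by
      simp only [T, Fin.val_succ, Fin.val_zero]
      split_ifs <;> first | rfl | omega | simp_all
    rw [this]; ring
  rw [Finset.sum_congr rfl (fun j _ => hrest j), Finset.sum_const_zero, add_zero]
  have h00 : T d a (n+2) 0 0 = d 0 := by simp [T]
  have h01 : T d a (n+2) 0 (0:Fin (n+1)).succ = a 0 := by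
    simp only [T, Fin.val_succ, Fin.val_zero]
    split_ifs <;> first | rfl | omega | simp_all
  have hm0 : (T d a (n+2)).submatrix Fin.succ (0 : Fin (n+2)).succAbove
      = T (fun i => d (i+1)) (fun i => a (i+1)) (n+1) := by
    ext i l
    simp only [Matrix.submatrix_apply, Fin.succAbove_zero, T, Fin.val_succ]
    split_ifs <;> first | rfl | omega | (congr 1; omega) | simp_all
  have hBdet : ((T d a (n+2)).submatrix Fin.succ ((0:Fin (n+1)).succ).succAbove).det
      = a 0 * (T (fun i => d (i+2)) (fun i => a (i+2)) n).det := by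
    set B := (T d a (n+2)).submatrix Fin.succ ((0:Fin (n+1)).succ).succAbove with hB
    rw [Matrix.det_succ_column_zero, Fin.sum_univ_succ]
    have hB0 : ∀ i : Fin (n+1), B i 0 = if i.1 = 0 then a 0 else 0 := by
      intro i
      have hc : ((0:Fin (n+1)).succ).succAbove 0 = 0 := by
        simp [Fin.succAbove]
      simp only [hB, Matrix.submatrix_apply, hc, T, Fin.val_succ, Fin.val_zero]
      split_ifs <;> first | rfl | omega | simp_all
    have hrest2 : ∀ i : Fin n, (-1:ℝ) ^ ((i.succ : Fin (n+1)) : ℕ) * B i.succ 0 *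
        ((B.submatrix i.succ.succAbove Fin.succ).det) = 0 := by
      intro i
      rw [hB0]
      simp [Fin.val_succ]
    rw [Finset.sum_congr rfl (fun i _ => hrest2 i), Finset.sum_const_zero, add_zero]
    have hB00 : B 0 0 = a 0 := by rw [hB0]; simp
    have hmm : B.submatrix (0 : Fin (n+1)).succAbove Fin.succ
        = T (fun i => d (i+2)) (fun i => a (i+2)) n := by
      ext i l
      have hc2 : ((0:Fin (n+1)).succ).succAbove l.succ = l.succ.succ := by
        simp [Fin.succAbove, Fin.lt_def]
      simp only [hB, Matrix.submatrix_apply, Fin.succAbove_zero, hc2, T, Fin.val_succ]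
      split_ifs <;> first | rfl | omega | (congr 1; omega) | simp_all
    rw [hB00, hmm]
    simp
  rw [h00, h01, hm0, hBdet]
  simp only [Fin.val_zero, Fin.val_succ, pow_zero, pow_one, one_mul]
  ring

lemma T_det_rev (d a : ℕ → ℝ) (m : ℕ) :
    (T d a m).det = (T (fun x => d (m - 1 - x)) (fun x => a (m - 2 - x)) m).det := by
  rw [← Matrix.det_submatrix_equiv_self (Fin.revPerm) (T d a m)]
  congr 1
  ext i l
  simp only [Matrix.submatrix_apply, Fin.revPerm_apply, T, Fin.val_rev]
  split_ifs <;> first | rfl | omega | (congr 1; omega) | simp_all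

lemma T_det_back (d a : ℕ → ℝ) (n : ℕ) :
    (T d a (n+2)).det = d (n+1) * (T d a (n+1)).det - a n ^ 2 * (T d a n).det := by
  rw [T_det_rev d a (n+2), T_det_front, T_det_rev d a (n+1), T_det_rev d a n]
  have e1 : T (fun i => d (n + 2 - 1 - (i+1))) (fun i => a (n + 2 - 2 - (i+1))) (n+1)
      = T (fun x => d (n + 1 - 1 - x)) (fun x => a (n + 1 - 2 - x)) (n+1) :=
    T_congr (fun i _ => by congr 1; omega) (fun i hi => by congr 1; omega)
  have e2 : T (fun i => d (n + 2 - 1 - (i+2))) (fun i => a (n + 2 - 2 - (i+2))) n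
      = T (fun x => d (n - 1 - x)) (fun x => a (n - 2 - x)) n :=
    T_congr (fun i _ => by congr 1; omega) (fun i hi => by congr 1; omega)
  rw [e1, e2]
  norm_num

/-- The `(n+2) × (n+2)` Jacobi matrix of the reflected random walk on the path:
zero diagonal, `J(0,1) = √q`, `J(i,i+1) = √(pq)` for `1 ≤ i ≤ n-1`, `J(n,n+1) = √p`,
and symmetric. -/
noncomputable def jacobiM (p q : ℝ) (n : ℕ) : Matrix (Fin (n + 2)) (Fin (n + 2)) ℝ :=
  fun k l =>
    if k.1 + 1 = l.1 then
      (if k.1 = 0 then Real.sqrt q else if k.1 = n then Real.sqrt p else Real.sqrt (p * q))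
    else if l.1 + 1 = k.1 then
      (if l.1 = 0 then Real.sqrt q else if l.1 = n then Real.sqrt p else Real.sqrt (p * q))
    else 0

/-- The adjacency matrix of the path graph on `j` vertices. -/
def pathAdj (j : ℕ) : Matrix (Fin j) (Fin j) ℝ :=
  fun i l => if i.1 + 1 = l.1 ∨ l.1 + 1 = i.1 then 1 else 0

/-- `E_j(λ) = det(λ·I_j - √(pq)·A_j)` (with `E_0(λ) = 1`, the determinant of the empty
matrix). -/
noncomputable def Edet (p q lam : ℝ) (j : ℕ) : ℝ :=
  (lam • (1 : Matrix (Fin j) (Fin j) ℝ) - Real.sqrt (p * q) • pathAdj j).det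

lemma Edet_eq (p q lam : ℝ) (j : ℕ) :
    Edet p q lam j = (T (fun _ => lam) (fun _ => -Real.sqrt (p * q)) j).det := by
  unfold Edet
  congr 1
  ext i l
  simp only [Matrix.sub_apply, Matrix.smul_apply, Matrix.one_apply, pathAdj, T, smul_eq_mul,
    Fin.ext_iff]
  split_ifs <;> first | ring1 | omega | (exfalso; omega)


/-- **Lemma (recurrence for the characteristic determinant).** For every `k ≥ 2` and
every real `λ`, `det(λ·I_{k+2} - J_{k+2}) = λ²·E_k(λ) - λ·E_{k-1}(λ) + pq·E_{k-2}(λ)`. -/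
theorem det_charMatrix_jacobiM_recurrence
    (p q : ℝ) (hp0 : 0 < p) (hp1 : p < 1) (hq0 : 0 < q) (hq1 : q < 1) (hpq : p + q = 1)
    (k : ℕ) (hk : 2 ≤ k) (lam : ℝ) :
    (lam • (1 : Matrix (Fin (k + 2)) (Fin (k + 2)) ℝ) - jacobiM p q k).det =
      lam ^ 2 * Edet p q lam k - lam * Edet p q lam (k - 1) + p * q * Edet p q lam (k - 2) := by
  obtain ⟨m, rfl⟩ : ∃ m, k = m + 2 := ⟨k - 2, by omega⟩
  set c : ℕ → ℝ := fun _ => lam with hc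
  set a : ℕ → ℝ := fun i => if i = 0 then -Real.sqrt q
    else if i = m + 2 then -Real.sqrt p else -Real.sqrt (p*q) with ha
  have hM : lam • (1 : Matrix (Fin (m+2+2)) (Fin (m+2+2)) ℝ) - jacobiM p q (m+2)
      = T c a (m+2+2) := by
    ext i l
    simp only [Matrix.sub_apply, Matrix.smul_apply, Matrix.one_apply, smul_eq_mul, jacobiM, T,
      Fin.ext_iff, ha, hc]
    split_ifs <;> first | ring1 | omega | (exfalso; omega)
  have hfront := T_det_front c a (m+2)
  have haval : ∀ i : ℕ, 0 < i → i < m + 2 → a i = -Real.sqrt (p * q) := by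
    intro i h1 h2
    simp only [ha]
    split_ifs <;> first | rfl | (exfalso; omega)
  have e1 : T (fun i => c (i+1)) (fun i => a (i+1)) (m+1+1)
      = T (fun _ => lam) (fun _ => -Real.sqrt (p * q)) (m+1+1) :=
    T_congr (fun i _ => rfl) (fun i hi => haval (i+1) (by omega) (by omega))
  have e2 : T (fun i => c (i+1)) (fun i => a (i+1)) (m+1)
      = T (fun _ => lam) (fun _ => -Real.sqrt (p * q)) (m+1) :=
    T_congr (fun i _ => rfl) (fun i hi => haval (i+1) (by omega) (by omega))
  have e3 : T (fun i => c (i+2)) (fun i => a (i+2)) (m+1)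
      = T (fun _ => lam) (fun _ => -Real.sqrt (p * q)) (m+1) :=
    T_congr (fun i _ => rfl) (fun i hi => haval (i+2) (by omega) (by omega))
  have e4 : T (fun i => c (i+2)) (fun i => a (i+2)) m
      = T (fun _ => lam) (fun _ => -Real.sqrt (p * q)) m :=
    T_congr (fun i _ => rfl) (fun i hi => haval (i+2) (by omega) (by omega))
  have hb1 := T_det_back (fun i => c (i+1)) (fun i => a (i+1)) (m+1)
  rw [e1, e2] at hb1
  have hb2 := T_det_back (fun i => c (i+2)) (fun i => a (i+2)) m
  rw [e3, e4] at hb2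
  rw [show m+2+1 = m+1+2 from by omega] at hfront
  rw [hb1, hb2] at hfront
  have hE : ∀ j : ℕ, (T (fun _ => lam) (fun _ => -Real.sqrt (p * q)) j).det = Edet p q lam j :=
    fun j => (Edet_eq p q lam j).symm
  rw [hM, hfront]
  simp only [hE, hc]
  have ha0 : a 0 = -Real.sqrt q := by simp [ha]
  have ha2 : a (m+2) = -Real.sqrt p := by simp [ha]
  have ha1 : a (m+1+1) = -Real.sqrt p := ha2
  rw [ha0, ha1]
  have hq' : (-Real.sqrt q) ^ 2 = q := by rw [neg_sq]; exact Real.sq_sqrt hq0.le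
  have hp' : (-Real.sqrt p) ^ 2 = p := by rw [neg_sq]; exact Real.sq_sqrt hp0.le
  rw [hq', hp']
  have i1 : m + 1 + 1 = m + 2 := by omega
  have i2 : m + 2 - 1 = m + 1 := by omega
  have i3 : m + 2 - 2 = m := by omega
  rw [i1, i2, i3]
  linear_combination (-(lam * Edet p q lam (m+1))) * hpq
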